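/- Let A be a subalgebra of a finite-dimensional k-algebra B with J_A = J_B, and let N_i, N_j be indecomposable B-modules that are not simple. If the restrictions of N_i and N_j to A are isomorphic as A-modules, then N_i and N_j are isomorphic as B-modules. -/

import Mathlib

noncomputable section

/-- The Jacobson radical of a ring, as a set. -/
def jacobsonSet (R : Type) [Ring R] : Set R := ((⊥ : Ideal R).jacobson : Set R)

section Restriction

variable (k B : Type) [Field k] [Ring B] [Algebra k B] (S : Subalgebra k B)

/-- Restriction of a `B`-module structure to the subalgebra `S ⊆ B`. -/
def restModule (N : Type) [AddCommGroup N] [Module B N] : Module ↥S N :=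
  Module.compHom N (S.val.toRingHom : ↥S →+* B)

variable (X : Type) [AddCommGroup X] [Module ↥S X]

/-- `X⁻ = Hom_A(B, X)` for an `A = S`-module `X`, where `B` is regarded as an
`A`-module by restriction; it is a left `B`-module via `(b • φ) x = φ (x * b)`. -/
def HomMinus : Type := B →ₗ[↥S] X

instance : AddCommGroup (HomMinus k B S X) :=
  inferInstanceAs (AddCommGroup (B →ₗ[↥S] X))

/-- The underlying `S`-linear map of an element of `X⁻`. -/
def HomMinus.toLin (φ : HomMinus k B S X) : B →ₗ[↥S] X := φ

instance : Module B (HomMinus k B S X) where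
  smul b φ := (HomMinus.toLin k B S X φ).comp (LinearMap.mulRight ↥S b)
  one_smul φ := LinearMap.ext fun x => by
    show HomMinus.toLin k B S X φ (x * 1) = HomMinus.toLin k B S X φ x
    rw [mul_one]
  mul_smul a b φ := LinearMap.ext fun x => by
    show HomMinus.toLin k B S X φ (x * (a * b)) = HomMinus.toLin k B S X φ ((x * a) * b)
    rw [mul_assoc]
  smul_zero a := LinearMap.ext fun _ => rfl
  smul_add a φ ψ := LinearMap.ext fun _ => rfl
  add_smul a b φ := LinearMap.ext fun x => by
    show HomMinus.toLin k B S X φ (x * (a + b)) =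
      HomMinus.toLin k B S X φ (x * a) + HomMinus.toLin k B S X φ (x * b)
    rw [mul_add, map_add]
  zero_smul φ := LinearMap.ext fun x => by
    show HomMinus.toLin k B S X φ (x * 0) = 0
    rw [mul_zero, map_zero]

lemma apply_coe_eq_smul_apply_one (φ : B →ₗ[↥S] X) (a : ↥S) :
    φ (a : B) = a • φ 1 := by
  have h : a • (1 : B) = (a : B) := by
    show (a : B) * 1 = (a : B)
    exact mul_one _
  rw [← h, map_smul]

/-- The evaluation map `ε_X : X⁻ → X`, `φ ↦ φ 1`, an `A = S`-module homomorphism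
(where `X⁻` is an `A`-module by restriction of its `B`-module structure). -/
def epsLin :
    letI := restModule k B S (HomMinus k B S X)
    HomMinus k B S X →ₗ[↥S] X :=
  letI := restModule k B S (HomMinus k B S X)
  { toFun := fun φ => HomMinus.toLin k B S X φ 1
    map_add' := fun _ _ => rfl
    map_smul' := by
      intro a φ
      show HomMinus.toLin k B S X φ ((1 : B) * (a : B)) =
        a • HomMinus.toLin k B S X φ 1
      rw [one_mul]
      exact apply_coe_eq_smul_apply_one k B S X (HomMinus.toLin k B S X φ) a }

variable (Y : Type) [AddCommGroup Y] [Module B Y]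

/-- The map `Hom_B(Y, X⁻) → Hom_A(Y, X)` sending `f` to the composite of `f`
followed by `ε_X`. -/
def transferMap (f : Y →ₗ[B] HomMinus k B S X) :
    letI := restModule k B S Y
    Y →ₗ[↥S] X :=
  letI := restModule k B S Y
  { toFun := fun y => HomMinus.toLin k B S X (f y) 1
    map_add' := fun y z => by
      show HomMinus.toLin k B S X (f (y + z)) 1 = _
      rw [map_add]
      rfl
    map_smul' := by
      intro a y
      show HomMinus.toLin k B S X (f ((a : B) • y)) 1 =
        a • HomMinus.toLin k B S X (f y) 1
      rw [map_smul]
      show HomMinus.toLin k B S X (f y) ((1 : B) * (a : B)) =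
        a • HomMinus.toLin k B S X (f y) 1
      rw [one_mul]
      exact apply_coe_eq_smul_apply_one k B S X (HomMinus.toLin k B S X (f y)) a }

end Restriction

end

/-- A module is indecomposable if it is nonzero and admits no nontrivial direct sum
decomposition. -/
def IsIndecomposableModule (A : Type) [Ring A] (M : Type) [AddCommGroup M] [Module A M] :
    Prop :=
  Nontrivial M ∧ ∀ N₁ N₂ : Submodule A M, IsCompl N₁ N₂ → N₁ = ⊥ ∨ N₂ = ⊥

namespace RadProof

variable {B : Type} [Ring B]

abbrev jac (B : Type) [Ring B] : Ideal B := (⊥ : Ideal B).jacobson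

lemma jac_mul_mem {x : B} (hx : x ∈ jac B) (y : B) : x * y ∈ jac B :=
  (jac B).mul_mem_right y hx

lemma jac_le_of_isMaximal {m : Ideal B} (hm : m.IsMaximal) : jac B ≤ m :=
  sInf_le ⟨bot_le, hm⟩

lemma jac_smul_simple {M : Type} [AddCommGroup M] [Module B M] [IsSimpleModule B M]
    {j : B} (hj : j ∈ jac B) (m : M) : j • m = 0 := by
  by_cases hm : m = 0
  · simp [hm]
  · have hmax := IsSimpleModule.ker_toSpanSingleton_isMaximal B hm
    have hker := jac_le_of_isMaximal hmax hj
    simpa [LinearMap.mem_ker, LinearMap.toSpanSingleton_apply] using hker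

def socA (B M : Type) [Ring B] [AddCommGroup M] [Module B M] : Submodule B M where
  carrier := {x | ∀ j ∈ jac B, j • x = 0}
  add_mem' := by
    intro a b ha hb j hj
    rw [smul_add, ha j hj, hb j hj, add_zero]
  zero_mem' := by intro j hj; rw [smul_zero]
  smul_mem' := by
    intro c x hx j hj
    rw [smul_smul]
    exact hx _ (jac_mul_mem hj c)

lemma mem_socA {M : Type} [AddCommGroup M] [Module B M] {x : M} :
    x ∈ socA B M ↔ ∀ j ∈ jac B, j • x = 0 := Iff.rfl

def jradOn {M : Type} [AddCommGroup M] [Module B M] (T : Submodule B M) : Submodule B M :=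
  Submodule.span B {x | ∃ j ∈ jac B, ∃ m ∈ T, x = j • m}

def jrad (B M : Type) [Ring B] [AddCommGroup M] [Module B M] : Submodule B M :=
  jradOn (⊤ : Submodule B M)

lemma jradOn_le {M : Type} [AddCommGroup M] [Module B M] (T : Submodule B M) :
    jradOn T ≤ T := by
  rw [jradOn, Submodule.span_le]
  rintro x ⟨j, _, m, hm, rfl⟩
  exact T.smul_mem j hm

lemma smul_mem_jradOn {M : Type} [AddCommGroup M] [Module B M] {T : Submodule B M}
    {j : B} (hj : j ∈ jac B) {m : M} (hm : m ∈ T) : j • m ∈ jradOn T :=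
  Submodule.subset_span ⟨j, hj, m, hm, rfl⟩

lemma smul_mem_jrad {M : Type} [AddCommGroup M] [Module B M]
    {j : B} (hj : j ∈ jac B) (m : M) : j • m ∈ jrad B M :=
  smul_mem_jradOn (T := (⊤ : Submodule B M)) hj Submodule.mem_top

lemma semisimple_of_simple {M : Type} [AddCommGroup M] [Module B M] [IsSimpleModule B M] :
    IsSemisimpleModule B M := by
  haveI : IsSimpleModule B (⊤ : Submodule B M) :=
    IsSimpleModule.congr (Submodule.topEquiv)
  exact IsSemisimpleModule.of_sSup_simples_eq_top
    (top_le_iff.mp (le_sSup (show IsSimpleModule B (⊤ : Submodule B M) from inferInstance)))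

lemma semisimple_of_subsingleton {M : Type} [AddCommGroup M] [Module B M] [Subsingleton M] :
    IsSemisimpleModule B M := by
  refine { toComplementedLattice := ⟨?_⟩ }
  intro a
  have ha : a = ⊤ := by
    apply Submodule.eq_top_iff'.mpr
    intro x
    rw [Subsingleton.elim x 0]
    exact a.zero_mem
  rw [ha]
  exact ⟨⊥, isCompl_top_bot⟩

lemma semisimple_prod {M N : Type} [AddCommGroup M] [Module B M] [AddCommGroup N] [Module B N]
    [IsSemisimpleModule B M] [IsSemisimpleModule B N] : IsSemisimpleModule B (M × N) := by
  apply isSemisimpleModule_of_isSemisimpleModule_submodule'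
    (p := fun b : Bool => if b then LinearMap.range (LinearMap.inl B M N)
      else LinearMap.range (LinearMap.inr B M N))
  · intro b
    cases b
    · rw [if_neg (by decide)]
      exact IsSemisimpleModule.congr (LinearEquiv.ofInjective _ (LinearMap.inr_injective)).symm
    · rw [if_pos rfl]
      exact IsSemisimpleModule.congr (LinearEquiv.ofInjective _ (LinearMap.inl_injective)).symm
  · rw [iSup_bool_eq, if_pos rfl, if_neg Bool.false_ne_true]
    exact LinearMap.sup_range_inl_inr

lemma quot_finset_inf_maximals_semisimple (s : Finset (Ideal B)) (hs : ∀ m ∈ s, m.IsMaximal) :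
    IsSemisimpleModule B (B ⧸ (s.inf id : Ideal B)) := by
  classical
  induction s using Finset.induction_on with
  | empty =>
      haveI : Subsingleton (B ⧸ ((∅ : Finset (Ideal B)).inf id : Ideal B)) := by
        constructor
        intro a b
        obtain ⟨x, rfl⟩ := Submodule.Quotient.mk_surjective _ a
        obtain ⟨y, rfl⟩ := Submodule.Quotient.mk_surjective _ b
        rw [Submodule.Quotient.eq]
        simp
      exact semisimple_of_subsingleton
  | @insert m s hm ih =>
      have hmax : m.IsMaximal := hs m (Finset.mem_insert_self m s)
      have hs' : ∀ m' ∈ s, m'.IsMaximal := fun m' hm' => hs m' (Finset.mem_insert_of_mem hm')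
      haveI hI : IsSemisimpleModule B (B ⧸ (s.inf id : Ideal B)) := ih hs'
      haveI : IsSimpleModule B (B ⧸ (m : Ideal B)) :=
        isSimpleModule_iff_isCoatom.mpr (Ideal.isMaximal_def.mp hmax)
      haveI : IsSemisimpleModule B (B ⧸ (m : Ideal B)) := semisimple_of_simple
      haveI : IsSemisimpleModule B ((B ⧸ (m : Ideal B)) × (B ⧸ (s.inf id : Ideal B))) :=
        semisimple_prod
      set I : Ideal B := m ⊓ s.inf id with hIdef
      have hinsert : (insert m s).inf id = I := by
        rw [Finset.inf_insert]; rfl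
      let ψ : (B ⧸ (I : Ideal B)) →ₗ[B] (B ⧸ (m : Ideal B)) × (B ⧸ (s.inf id : Ideal B)) :=
        LinearMap.prod (Submodule.mapQ I m LinearMap.id inf_le_left)
          (Submodule.mapQ I (s.inf id) LinearMap.id inf_le_right)
      have hinj : Function.Injective ψ := by
        rw [← LinearMap.ker_eq_bot]
        rw [eq_bot_iff]
        intro x hx
        obtain ⟨b, rfl⟩ := Submodule.Quotient.mk_surjective _ x
        rw [LinearMap.mem_ker] at hx
        have h1 : Submodule.mapQ I m LinearMap.id inf_le_left (Submodule.Quotient.mk b) = 0 := by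
          have := congrArg Prod.fst hx
          simpa [ψ] using this
        have h2 : Submodule.mapQ I (s.inf id) LinearMap.id inf_le_right
            (Submodule.Quotient.mk b) = 0 := by
          have := congrArg Prod.snd hx
          simpa [ψ] using this
        rw [Submodule.mapQ_apply, Submodule.Quotient.mk_eq_zero] at h1 h2
        simp only [LinearMap.id_apply] at h1 h2
        simp only [Submodule.mem_bot]
        rw [Submodule.Quotient.mk_eq_zero]
        exact ⟨h1, h2⟩
      haveI : IsSemisimpleModule B (B ⧸ (I : Ideal B)) :=
        IsSemisimpleModule.congr (LinearEquiv.ofInjective ψ hinj)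
      exact IsSemisimpleModule.congr (Submodule.quotEquivOfEq _ _ (by rw [hinsert]))

lemma exists_finset_inf_maximals_eq_jac [IsArtinianRing B] :
    ∃ s : Finset (Ideal B), (∀ m ∈ s, m.IsMaximal) ∧ (s.inf id : Ideal B) = jac B := by
  classical
  have hne : Set.Nonempty
      {I : Ideal B | ∃ s : Finset (Ideal B), (∀ m ∈ s, m.IsMaximal) ∧ s.inf id = I} :=
    ⟨⊤, ∅, by simp, by simp⟩
  obtain ⟨I₀, hI₀, hmin⟩ := IsArtinian.set_has_minimal _ hne
  obtain ⟨s, hs, hsI⟩ := hI₀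
  refine ⟨s, hs, ?_⟩
  rw [hsI]
  apply le_antisymm
  · apply le_sInf
    rintro m ⟨-, hm⟩
    by_contra hnle
    have hmem : I₀ ⊓ m ∈
        {I : Ideal B | ∃ s : Finset (Ideal B), (∀ m ∈ s, m.IsMaximal) ∧ s.inf id = I} := by
      refine ⟨insert m s, fun m' hm' => ?_, ?_⟩
      · rcases Finset.mem_insert.mp hm' with h | h
        · exact h ▸ hm
        · exact hs m' h
      · rw [Finset.inf_insert, hsI]
        simp [inf_comm]
    exact (hmin _ hmem) (inf_lt_left.mpr hnle)
  · exact hsI ▸ Finset.le_inf fun m hm => jac_le_of_isMaximal (hs m hm)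

/-- A module killed by the Jacobson radical of an artinian ring is semisimple. -/
lemma semisimple_of_jac_smul_zero [IsArtinianRing B] {M : Type} [AddCommGroup M] [Module B M]
    (h : ∀ j ∈ jac B, ∀ m : M, j • m = 0) : IsSemisimpleModule B M := by
  obtain ⟨s, hs, hinf⟩ := exists_finset_inf_maximals_eq_jac (B := B)
  haveI := quot_finset_inf_maximals_semisimple s hs
  haveI : IsSemisimpleModule B (B ⧸ (jac B : Ideal B)) :=
    IsSemisimpleModule.congr (Submodule.quotEquivOfEq _ _ hinf.symm)
  apply isSemisimpleModule_of_isSemisimpleModule_submodule'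
    (p := fun x : M => Submodule.span B {x})
  · intro x
    have hker : (jac B : Ideal B) ≤ LinearMap.ker (LinearMap.toSpanSingleton B M x) :=
      fun j hj => by
        rw [LinearMap.mem_ker, LinearMap.toSpanSingleton_apply]
        exact h j hj x
    have hr : LinearMap.range (Submodule.liftQ (jac B : Ideal B)
        (LinearMap.toSpanSingleton B M x) hker) = Submodule.span B {x} := by
      rw [Submodule.range_liftQ, ← LinearMap.span_singleton_eq_range]
    exact hr ▸ IsSemisimpleModule.range _
  · rw [eq_top_iff]
    intro x _
    exact le_iSup (fun x : M => Submodule.span B {x}) x (Submodule.mem_span_singleton_self x)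

lemma jrad_ne_top {M : Type} [AddCommGroup M] [Module B M] [IsNoetherian B M] [Nontrivial M] :
    jrad B M ≠ ⊤ := by
  obtain ⟨P, hP, hmaxP⟩ := (set_has_maximal_iff_noetherian.mpr inferInstance)
    {U : Submodule B M | U ≠ ⊤} (by
      refine ⟨⊥, fun hbot => ?_⟩
      obtain ⟨x, hx⟩ := exists_ne (0 : M)
      have hxmem : x ∈ (⊤ : Submodule B M) := Submodule.mem_top
      rw [← hbot, Submodule.mem_bot] at hxmem
      exact hx hxmem)
  have hPco : IsCoatom P := by
    refine ⟨hP, fun U hU => ?_⟩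
    by_contra hUne
    exact hmaxP U hUne hU
  haveI : IsSimpleModule B (M ⧸ P) := isSimpleModule_iff_isCoatom.mpr hPco
  intro htop
  have hle : jrad B M ≤ P := by
    rw [jrad, jradOn, Submodule.span_le]
    rintro x ⟨j, hj, m, -, rfl⟩
    have h0 : (Submodule.Quotient.mk (j • m) : M ⧸ P) = 0 := by
      rw [Submodule.Quotient.mk_smul]
      exact jac_smul_simple hj _
    rwa [Submodule.Quotient.mk_eq_zero] at h0
  rw [htop] at hle
  exact hP (top_le_iff.mp hle)

/-- For an indecomposable non-simple module, the socle-type submodule is contained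
in the radical-type submodule. -/
lemma soc_le_jrad [IsArtinianRing B] {M : Type} [AddCommGroup M] [Module B M]
    (hind : IsIndecomposableModule B M) (hns : ¬ IsSimpleModule B M) :
    socA B M ≤ jrad B M := by
  classical
  haveI hssS : IsSemisimpleModule B ↥(socA B M) :=
    semisimple_of_jac_smul_zero (fun j hj x => by
      ext
      rw [Submodule.coe_smul]
      exact x.2 j hj)
  obtain ⟨T', hT'⟩ := exists_isCompl (Submodule.comap (socA B M).subtype (jrad B M))
  set T : Submodule B M := Submodule.map (socA B M).subtype T' with hTdef
  have hTS : T ≤ socA B M := Submodule.map_subtype_le _ _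
  have hTrad : T ⊓ jrad B M = ⊥ := by
    rw [eq_bot_iff]
    rintro x ⟨hxT, hxrad⟩
    obtain ⟨x', hx'T, rfl⟩ := hxT
    have hx'c : x' ∈ Submodule.comap (socA B M).subtype (jrad B M) := hxrad
    have : x' ∈ T' ⊓ Submodule.comap (socA B M).subtype (jrad B M) := ⟨hx'T, hx'c⟩
    rw [inf_comm, hT'.inf_eq_bot] at this
    simp only [Submodule.mem_bot] at this ⊢
    rw [this]
    rfl
  haveI hssQ : IsSemisimpleModule B (M ⧸ jrad B M) :=
    semisimple_of_jac_smul_zero (fun j hj x => by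
      obtain ⟨m, rfl⟩ := Submodule.Quotient.mk_surjective _ x
      rw [← Submodule.Quotient.mk_smul]
      exact Submodule.Quotient.mk_eq_zero _ |>.mpr (smul_mem_jrad hj m))
  obtain ⟨C, hC⟩ := exists_isCompl (Submodule.map (jrad B M).mkQ T)
  set M₀ : Submodule B M := Submodule.comap (jrad B M).mkQ C with hM₀def
  have hcompl : IsCompl M₀ T := by
    constructor
    · rw [disjoint_iff, eq_bot_iff]
      rintro x ⟨hxM, hxT⟩
      have h1 : (jrad B M).mkQ x ∈ Submodule.map (jrad B M).mkQ T ⊓ C :=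
        ⟨⟨x, hxT, rfl⟩, hxM⟩
      rw [hC.inf_eq_bot] at h1
      simp only [Submodule.mem_bot] at h1
      have hxrad : x ∈ jrad B M := by
        rwa [← Submodule.Quotient.mk_eq_zero]
      have : x ∈ T ⊓ jrad B M := ⟨hxT, hxrad⟩
      rwa [hTrad] at this
    · rw [codisjoint_iff, eq_top_iff]
      intro n _
      have hn : (jrad B M).mkQ n ∈ Submodule.map (jrad B M).mkQ T ⊔ C := by
        rw [hC.sup_eq_top]; exact Submodule.mem_top
      obtain ⟨y, hy, c, hc, heq⟩ := Submodule.mem_sup.mp hn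
      obtain ⟨t, ht, rfl⟩ := hy
      have hnt : n - t ∈ M₀ := by
        show (jrad B M).mkQ (n - t) ∈ C
        rw [map_sub]
        have : (jrad B M).mkQ n - (jrad B M).mkQ t = c := by
          rw [← heq]; abel
        rw [this]
        exact hc
      have : n = (n - t) + t := by abel
      rw [this]
      exact Submodule.add_mem_sup hnt ht
  rcases hind.2 M₀ T hcompl with h0 | h0
  · exfalso
    have hT_top : T = ⊤ := by
      have := hcompl.sup_eq_top
      rwa [h0, bot_sup_eq] at this
    have hStop : socA B M = ⊤ := top_le_iff.mp (hT_top ▸ hTS)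
    haveI : IsSemisimpleModule B M := semisimple_of_jac_smul_zero (fun j hj m =>
      (show m ∈ socA B M from hStop.symm ▸ Submodule.mem_top) j hj)
    apply hns
    haveI hnt : Nontrivial M := hind.1
    obtain ⟨m, hm⟩ := IsSemisimpleModule.exists_simple_submodule B M
    obtain ⟨c, hc⟩ := exists_isCompl m
    rcases hind.2 m c hc with h | h
    · exact absurd h (isSimpleModule_iff_isAtom.mp hm).1
    · have hm_top : m = ⊤ := by
        have := hc.sup_eq_top
        rwa [h, sup_bot_eq] at this
      haveI : IsSimpleModule B ↥(⊤ : Submodule B M) := hm_top ▸ hm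
      exact IsSimpleModule.congr Submodule.topEquiv.symm
  · have hT'bot : T' = ⊥ := by
      apply Submodule.map_injective_of_injective
        (show Function.Injective (socA B M).subtype from Subtype.coe_injective)
      rw [← hTdef, h0, Submodule.map_bot]
    rw [hT'bot] at hT'
    have hcomap : Submodule.comap (socA B M).subtype (jrad B M) = ⊤ := by
      have := hT'.sup_eq_top
      rwa [sup_bot_eq] at this
    intro x hx
    exact (show (⟨x, hx⟩ : ↥(socA B M)) ∈ Submodule.comap (socA B M).subtype (jrad B M) from
      hcomap ▸ Submodule.mem_top)

end RadProof

section CoreDefs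
set_option linter.unusedSectionVars false

open RadProof

variable {B : Type} [Ring B] {N₁ N₂ : Type} [AddCommGroup N₁] [Module B N₁]
  [AddCommGroup N₂] [Module B N₂]

/-- The defect of `B`-linearity of an additive map. -/
def dlt (φ : N₁ →+ N₂) (b : B) (n : N₁) : N₂ := φ (b • n) - b • φ n

lemma dlt_mem_socA (φ : N₁ →+ N₂) (hφ : ∀ j ∈ jac B, ∀ n : N₁, φ (j • n) = j • φ n)
    (b : B) (n : N₁) : dlt φ b n ∈ socA B N₂ := by
  intro j hj
  have h1 : j • φ (b • n) = φ ((j * b) • n) := by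
    rw [mul_smul]
    exact (hφ j hj _).symm
  have h2 : j • (b • φ n) = φ ((j * b) • n) := by
    rw [← mul_smul]
    exact (hφ (j * b) (jac_mul_mem hj b) n).symm
  rw [dlt, smul_sub, h1, h2, sub_self]

lemma dlt_jac_left (φ : N₁ →+ N₂) (hφ : ∀ j ∈ jac B, ∀ n : N₁, φ (j • n) = j • φ n)
    {j : B} (hj : j ∈ jac B) (n : N₁) : dlt φ j n = 0 := by
  rw [dlt, hφ j hj n, sub_self]

lemma dlt_zero_right (φ : N₁ →+ N₂) (b : B) : dlt φ b (0 : N₁) = 0 := by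
  rw [dlt, smul_zero, map_zero, smul_zero, sub_zero]

lemma dlt_add_right (φ : N₁ →+ N₂) (b : B) (n n' : N₁) :
    dlt φ b (n + n') = dlt φ b n + dlt φ b n' := by
  simp only [dlt, smul_add, map_add]
  abel

lemma dlt_add_left (φ : N₁ →+ N₂) (b b' : B) (n : N₁) :
    dlt φ (b + b') n = dlt φ b n + dlt φ b' n := by
  simp only [dlt, add_smul, map_add]
  abel

lemma dlt_mul (φ : N₁ →+ N₂) (b c : B) (n : N₁) :
    dlt φ (b * c) n = b • dlt φ c n + dlt φ b (c • n) := by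
  simp only [dlt, mul_smul, smul_sub]
  abel

lemma dlt_smul_right (φ : N₁ →+ N₂) (b c : B) (n : N₁) :
    dlt φ b (c • n) = dlt φ (b * c) n - b • dlt φ c n := by
  rw [dlt_mul]
  abel

lemma dlt_jrad (φ : N₁ →+ N₂) (hφ : ∀ j ∈ jac B, ∀ n : N₁, φ (j • n) = j • φ n)
    {m : N₁} (hm : m ∈ jrad B N₁) (b : B) : dlt φ b m = 0 := by
  revert b
  refine Submodule.span_induction (p := fun x _ => ∀ b : B, dlt φ b x = 0) ?_ ?_ ?_ ?_ hm
  · rintro x ⟨j, hj, m', -, rfl⟩ b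
    have hbj : b * j ∈ jac B := (jac B).smul_mem b hj
    rw [dlt, ← mul_smul, hφ (b * j) hbj, hφ j hj, ← mul_smul, sub_self]
  · intro b
    exact dlt_zero_right φ b
  · intro x y _ _ hx hy b
    rw [dlt_add_right, hx b, hy b, add_zero]
  · intro c x _ hx b
    rw [dlt_smul_right, hx (b * c), hx c, smul_zero, sub_zero]

/-- Twisted product carrier. -/
def Tw (B N₂ N₁ : Type) [Ring B] [AddCommGroup N₂] [Module B N₂] : Type :=
  ↥(socA B N₂) × N₁

instance : AddCommGroup (Tw B N₂ N₁) :=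
  inferInstanceAs (AddCommGroup (↥(socA B N₂) × N₁))

def Tw.mk (q : ↥(socA B N₂)) (n : N₁) : Tw B N₂ N₁ := (q, n)

def Tw.q (z : Tw B N₂ N₁) : ↥(socA B N₂) := (show ↥(socA B N₂) × N₁ from z).1

def Tw.n (z : Tw B N₂ N₁) : N₁ := (show ↥(socA B N₂) × N₁ from z).2

lemma Tw.ext {z w : Tw B N₂ N₁} (h1 : z.q = w.q) (h2 : z.n = w.n) : z = w :=
  Prod.ext h1 h2

@[simp] lemma Tw.q_mk (q : ↥(socA B N₂)) (n : N₁) : (Tw.mk q n : Tw B N₂ N₁).q = q := rfl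
@[simp] lemma Tw.n_mk (q : ↥(socA B N₂)) (n : N₁) : (Tw.mk q n : Tw B N₂ N₁).n = n := rfl
@[simp] lemma Tw.q_add (z w : Tw B N₂ N₁) : (z + w).q = z.q + w.q := rfl
@[simp] lemma Tw.n_add (z w : Tw B N₂ N₁) : (z + w).n = z.n + w.n := rfl
@[simp] lemma Tw.q_sub (z w : Tw B N₂ N₁) : (z - w).q = z.q - w.q := rfl
@[simp] lemma Tw.n_sub (z w : Tw B N₂ N₁) : (z - w).n = z.n - w.n := rfl
@[simp] lemma Tw.q_zero : (0 : Tw B N₂ N₁).q = 0 := rfl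
@[simp] lemma Tw.n_zero : (0 : Tw B N₂ N₁).n = 0 := rfl

/-- The twisted `B`-module structure. -/
def twModule (φ : N₁ →+ N₂) (hφ : ∀ j ∈ jac B, ∀ n : N₁, φ (j • n) = j • φ n) :
    Module B (Tw B N₂ N₁) :=
  letI : SMul B (Tw B N₂ N₁) :=
    ⟨fun b z => Tw.mk (b • z.q + ⟨dlt φ b z.n, dlt_mem_socA φ hφ b z.n⟩) (b • z.n)⟩
  Module.ofMinimalAxioms
    (fun b x y => by
      apply Tw.ext
      · show b • (x.q + y.q) + ⟨dlt φ b (x.n + y.n), _⟩ =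
          (b • x.q + ⟨dlt φ b x.n, _⟩) + (b • y.q + ⟨dlt φ b y.n, _⟩)
        apply Subtype.ext
        push_cast
        rw [dlt_add_right, smul_add]
        abel
      · show b • (x.n + y.n) = b • x.n + b • y.n
        rw [smul_add])
    (fun r s x => by
      apply Tw.ext
      · show (r + s) • x.q + ⟨dlt φ (r + s) x.n, _⟩ =
          (r • x.q + ⟨dlt φ r x.n, _⟩) + (s • x.q + ⟨dlt φ s x.n, _⟩)
        apply Subtype.ext
        push_cast
        rw [dlt_add_left, add_smul]
        abel
      · show (r + s) • x.n = r • x.n + s • x.n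
        rw [add_smul])
    (fun r s x => by
      apply Tw.ext
      · show (r * s) • x.q + ⟨dlt φ (r * s) x.n, _⟩ =
          r • (s • x.q + ⟨dlt φ s x.n, _⟩) + ⟨dlt φ r (s • x.n), _⟩
        apply Subtype.ext
        push_cast
        rw [dlt_mul, mul_smul, smul_add]
        abel
      · show (r * s) • x.n = r • s • x.n
        rw [mul_smul])
    (fun x => by
      apply Tw.ext
      · show (1 : B) • x.q + ⟨dlt φ 1 x.n, _⟩ = x.q
        apply Subtype.ext
        push_cast
        have h0 : dlt φ (1 : B) x.n = 0 := by rw [dlt, one_smul, one_smul, sub_self]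
        rw [h0, add_zero, one_smul]
      · show (1 : B) • x.n = x.n
        rw [one_smul])

end CoreDefs

section CoreLemma
set_option linter.unusedSectionVars false
set_option maxHeartbeats 1000000

open RadProof

variable {B : Type} [Ring B] {N₁ N₂ : Type} [AddCommGroup N₁] [Module B N₁]
  [AddCommGroup N₂] [Module B N₂]

/-- Core correction lemma: an additive surjection commuting with the Jacobson radical
action can be corrected to a surjective `B`-linear map, provided the target is
indecomposable and non-simple. -/
lemma core_surjective [IsArtinianRing B] [IsNoetherian B N₂] [IsArtinian B N₂]
    (φ : N₁ →+ N₂) (hsurj : Function.Surjective φ)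
    (hφ : ∀ j ∈ jac B, ∀ n : N₁, φ (j • n) = j • φ n)
    (hind₂ : IsIndecomposableModule B N₂) (hns₂ : ¬ IsSimpleModule B N₂) :
    ∃ g : N₁ →ₗ[B] N₂, Function.Surjective g := by
  classical
  letI : Module B (Tw B N₂ N₁) := twModule φ hφ
  have hsmul : ∀ (b : B) (q : ↥(socA B N₂)) (n : N₁),
      b • (Tw.mk q n : Tw B N₂ N₁) =
        Tw.mk (b • q + ⟨dlt φ b n, dlt_mem_socA φ hφ b n⟩) (b • n) := fun _ _ _ => rfl
  have hmk_eta : ∀ z : Tw B N₂ N₁, z = Tw.mk z.q z.n := fun _ => rfl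
  -- the submodule (0, jrad N₁)
  let Rt : Submodule B (Tw B N₂ N₁) :=
    { carrier := {z | z.q = 0 ∧ z.n ∈ jrad B N₁}
      add_mem' := by
        rintro a b ⟨ha1, ha2⟩ ⟨hb1, hb2⟩
        refine ⟨?_, Submodule.add_mem _ ha2 hb2⟩
        rw [Tw.q_add, ha1, hb1, add_zero]
      zero_mem' := ⟨rfl, Submodule.zero_mem _⟩
      smul_mem' := by
        rintro b z ⟨h1, h2⟩
        constructor
        · rw [hmk_eta z, hsmul]
          rw [Tw.q_mk]
          apply Subtype.ext
          push_cast
          rw [h1]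
          have : dlt φ b z.n = 0 := dlt_jrad φ hφ h2 b
          rw [this]
          simp
        · rw [hmk_eta z, hsmul, Tw.n_mk]
          exact Submodule.smul_mem _ b h2 }
  have hRt_mem : ∀ z : Tw B N₂ N₁, z ∈ Rt ↔ (z.q = 0 ∧ z.n ∈ jrad B N₁) := fun _ => Iff.rfl
  -- the quotient is killed by the radical, hence semisimple
  haveI hQss : IsSemisimpleModule B ((Tw B N₂ N₁) ⧸ Rt) :=
    semisimple_of_jac_smul_zero (fun j hj x => by
      obtain ⟨z, rfl⟩ := Submodule.Quotient.mk_surjective _ x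
      rw [← Submodule.Quotient.mk_smul, Submodule.Quotient.mk_eq_zero]
      rw [hRt_mem]
      constructor
      · rw [hmk_eta z, hsmul, Tw.q_mk]
        apply Subtype.ext
        push_cast
        rw [z.q.2 j hj, dlt_jac_left φ hφ hj]
        simp
      · rw [hmk_eta z, hsmul, Tw.n_mk]
        exact smul_mem_jrad hj z.n)
  -- embedding of the socle into the quotient
  let c₁ : ↥(socA B N₂) →ₗ[B] Tw B N₂ N₁ :=
    { toFun := fun q => Tw.mk q 0
      map_add' := by
        intro q q'
        apply Tw.ext
        · simp
        · simp
      map_smul' := by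
        intro b q
        rw [hsmul]
        apply Tw.ext
        · rw [Tw.q_mk]
          show b • q = b • q + ⟨dlt φ b 0, _⟩
          apply Subtype.ext
          push_cast
          rw [dlt_zero_right]
          simp
        · show (0 : N₁) = b • (0 : N₁)
          rw [smul_zero] }
  let cQ : ↥(socA B N₂) →ₗ[B] (Tw B N₂ N₁) ⧸ Rt := Rt.mkQ.comp c₁
  have hcQ_apply : ∀ q, cQ q = Rt.mkQ (Tw.mk q 0) := fun _ => rfl
  have hcQinj : Function.Injective cQ := by
    rw [← LinearMap.ker_eq_bot, eq_bot_iff]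
    intro q hq
    rw [LinearMap.mem_ker, hcQ_apply, Submodule.mkQ_apply, Submodule.Quotient.mk_eq_zero] at hq
    rw [hRt_mem] at hq
    simpa using hq.1
  obtain ⟨W, hW⟩ := exists_isCompl (LinearMap.range cQ)
  let π := Submodule.linearProjOfIsCompl _ _ hW
  let e : ↥(socA B N₂) ≃ₗ[B] ↥(LinearMap.range cQ) := LinearEquiv.ofInjective cQ hcQinj
  let es : ↥(LinearMap.range cQ) →ₗ[B] ↥(socA B N₂) := e.symm
  have hes : ∀ q : ↥(socA B N₂), es (e q) = q := fun q => e.symm_apply_apply q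
  have hπe : ∀ q : ↥(socA B N₂), π (cQ q) = e q := by
    intro q
    have h1 : (cQ q) = ((e q : ↥(LinearMap.range cQ)) : (Tw B N₂ N₁) ⧸ Rt) := by
      simp [e, LinearEquiv.ofInjective_apply]
    rw [h1]
    exact Submodule.linearProjOfIsCompl_apply_left hW (e q)
  set H : N₁ → ↥(socA B N₂) := fun n => es (π (Rt.mkQ (Tw.mk 0 n))) with hHdef
  have hH : ∀ (b : B) (n : N₁),
      H (b • n) = b • H n - ⟨dlt φ b n, dlt_mem_socA φ hφ b n⟩ := by
    intro b n
    have hz : (Tw.mk (0 : ↥(socA B N₂)) (b • n) : Tw B N₂ N₁)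
        = b • Tw.mk 0 n - c₁ ⟨dlt φ b n, dlt_mem_socA φ hφ b n⟩ := by
      rw [hsmul]
      apply Tw.ext
      · show (0 : ↥(socA B N₂)) =
          (b • (0 : ↥(socA B N₂)) + ⟨dlt φ b n, dlt_mem_socA φ hφ b n⟩) -
            ⟨dlt φ b n, dlt_mem_socA φ hφ b n⟩
        rw [smul_zero, zero_add, sub_self]
      · show b • n = b • n - 0
        rw [sub_zero]
    have h1 : Rt.mkQ (Tw.mk (0 : ↥(socA B N₂)) (b • n))
        = b • Rt.mkQ (Tw.mk 0 n) - cQ ⟨dlt φ b n, dlt_mem_socA φ hφ b n⟩ := by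
      rw [hz, map_sub, map_smul]
      rfl
    have h2 : π (Rt.mkQ (Tw.mk (0 : ↥(socA B N₂)) (b • n)))
        = b • π (Rt.mkQ (Tw.mk 0 n)) - e ⟨dlt φ b n, dlt_mem_socA φ hφ b n⟩ := by
      rw [h1, map_sub, map_smul, hπe]
    show es (π (Rt.mkQ (Tw.mk 0 (b • n)))) = b • es (π (Rt.mkQ (Tw.mk 0 n))) - _
    rw [h2, map_sub, map_smul, hes]
  have hHadd : ∀ n n' : N₁, H (n + n') = H n + H n' := by
    intro n n'
    have hz : (Tw.mk (0 : ↥(socA B N₂)) (n + n') : Tw B N₂ N₁)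
        = Tw.mk 0 n + Tw.mk 0 n' := by
      apply Tw.ext
      · simp
      · simp
    show es (π (Rt.mkQ (Tw.mk 0 (n + n')))) = _ + _
    rw [hz, map_add, map_add, map_add]
  -- the corrected linear map
  let g : N₁ →ₗ[B] N₂ :=
    { toFun := fun n => φ n + ((H n : ↥(socA B N₂)) : N₂)
      map_add' := by
        intro n n'
        show φ (n + n') + ((H (n + n') : ↥(socA B N₂)) : N₂)
          = (φ n + (H n : N₂)) + (φ n' + (H n' : N₂))
        rw [map_add, hHadd]
        push_cast
        abel
      map_smul' := by
        intro b n
        show φ (b • n) + ((H (b • n) : ↥(socA B N₂)) : N₂) = b • (φ n + (H n : N₂))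
        rw [hH b n]
        have hphi : φ (b • n) = b • φ n + dlt φ b n := by
          rw [dlt]
          abel
        rw [hphi]
        push_cast
        rw [smul_add]
        abel }
  refine ⟨g, ?_⟩
  have hg_apply : ∀ n, g n = φ n + ((H n : ↥(socA B N₂)) : N₂) := fun _ => rfl
  have hsoc : socA B N₂ ≤ jrad B N₂ := soc_le_jrad hind₂ hns₂
  set Cg := LinearMap.range g with hCgdef
  have hCsoc : ∀ y : N₂, y ∈ Cg ⊔ jrad B N₂ := by
    intro y
    obtain ⟨n, rfl⟩ := hsurj y
    have hyg : φ n = g n - ((H n : ↥(socA B N₂)) : N₂) := by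
      rw [hg_apply]
      abel
    rw [hyg]
    exact Submodule.sub_mem _ (Submodule.mem_sup_left (LinearMap.mem_range_self g n))
      (Submodule.mem_sup_right (hsoc (H n).2))
  -- iterated radical
  let U : ℕ → Submodule B N₂ := fun t => (fun T => jradOn T)^[t] ⊤
  have hU0 : U 0 = ⊤ := rfl
  have hUsucc : ∀ t, U (t + 1) = jradOn (U t) := fun t =>
    Function.iterate_succ_apply' (fun T => jradOn T) t ⊤
  have hUle : ∀ t, U t ≤ Cg ⊔ U (t + 1) := by
    intro t
    induction t with
    | zero =>
        rw [hU0, hUsucc, hU0]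
        intro y _
        exact hCsoc y
    | succ t ih =>
        rw [hUsucc t, jradOn, Submodule.span_le]
        rintro x ⟨j, hj, m, hm, rfl⟩
        obtain ⟨c, hc, u, hu, rfl⟩ := Submodule.mem_sup.mp (ih hm)
        rw [smul_add]
        have hju : j • u ∈ U (t + 1 + 1) := by
          rw [hUsucc (t + 1)]
          exact smul_mem_jradOn hj hu
        exact Submodule.add_mem _
          (Submodule.mem_sup_left (Submodule.smul_mem _ j hc))
          (Submodule.mem_sup_right hju)
  have hUtop : ∀ t, Cg ⊔ U t = ⊤ := by
    intro t
    induction t with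
    | zero => rw [hU0, sup_top_eq]
    | succ t ih =>
        rw [eq_top_iff, ← ih]
        exact sup_le le_sup_left (hUle t)
  -- stabilization
  obtain ⟨V, hVmem, hmin⟩ := IsArtinian.set_has_minimal
    {V : Submodule B N₂ | ∃ t, V = U t} ⟨⊤, 0, hU0.symm⟩
  obtain ⟨t₀, hVt⟩ := hVmem
  have heq : U (t₀ + 1) = V := by
    have hle : U (t₀ + 1) ≤ V := by
      rw [hVt, hUsucc]
      exact jradOn_le (U t₀)
    rcases lt_or_eq_of_le hle with h | h
    · exact absurd h (hmin _ ⟨t₀ + 1, rfl⟩)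
    · exact h
  have hstab : jradOn V = V := by
    conv_lhs => rw [hVt]
    rw [← hUsucc, heq]
  have hVbot : V = ⊥ := by
    by_contra hne
    haveI : Nontrivial ↥V := Submodule.nontrivial_iff_ne_bot.mpr hne
    apply jrad_ne_top (B := B) (M := ↥V)
    have hmap : Submodule.map V.subtype (jrad B ↥V) = jradOn V := by
      rw [jrad, jradOn, jradOn, Submodule.map_span]
      congr 1
      ext y
      constructor
      · rintro ⟨x, ⟨j, hj, m, -, rfl⟩, rfl⟩
        exact ⟨j, hj, m.val, m.2, rfl⟩
      · rintro ⟨j, hj, m, hm, rfl⟩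
        exact ⟨j • ⟨m, hm⟩, ⟨j, hj, ⟨m, hm⟩, Submodule.mem_top, rfl⟩, rfl⟩
    rw [eq_top_iff]
    rintro x -
    have hxv : x.val ∈ Submodule.map V.subtype (jrad B ↥V) := by
      rw [hmap, hstab]
      exact x.2
    obtain ⟨x', hx', hxx⟩ := hxv
    have hxeq : x' = x := Subtype.ext hxx
    rwa [hxeq] at hx'
  have hCg_top : Cg = ⊤ := by
    have h := hUtop t₀
    rw [← hVt, hVbot, sup_bot_eq] at h
    exact h
  rw [← LinearMap.range_eq_top]
  exact hCg_top

end CoreLemma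


section MainProof

open RadProof Function

theorem restriction_iso_implies_iso_aux
    (k B : Type) [Field k] [Ring B] [Algebra k B] [FiniteDimensional k B]
    (S : Subalgebra k B)
    (hJ : Subtype.val '' jacobsonSet ↥S = jacobsonSet B)
    (N₁ : Type) [AddCommGroup N₁] [Module B N₁] [Module.Finite B N₁]
    (N₂ : Type) [AddCommGroup N₂] [Module B N₂] [Module.Finite B N₂]
    (hind₁ : IsIndecomposableModule B N₁) (hind₂ : IsIndecomposableModule B N₂)
    (hns₁ : ¬ IsSimpleModule B N₁) (hns₂ : ¬ IsSimpleModule B N₂)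
    (hres : letI := restModule k B S N₁
            letI := restModule k B S N₂
            Nonempty (N₁ ≃ₗ[↥S] N₂)) :
    Nonempty (N₁ ≃ₗ[B] N₂) := by
  letI : Module ↥S N₁ := restModule k B S N₁
  letI : Module ↥S N₂ := restModule k B S N₂
  obtain ⟨f⟩ := hres
  haveI hartk : IsArtinian k B := inferInstance
  haveI hart : IsArtinianRing B := isArtinian_of_tower k hartk
  haveI hnoek : IsNoetherian k B := inferInstance
  haveI hnoe : IsNoetherianRing B := isNoetherian_of_tower k hnoek
  haveI : IsNoetherian B N₁ := isNoetherian_of_isNoetherianRing_of_finite B N₁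
  haveI : IsNoetherian B N₂ := isNoetherian_of_isNoetherianRing_of_finite B N₂
  haveI : IsArtinian B N₁ := inferInstance
  haveI : IsArtinian B N₂ := inferInstance
  let φ : N₁ →+ N₂ :=
    { toFun := fun n => f n
      map_zero' := map_zero f
      map_add' := fun a b => map_add f a b }
  let φ' : N₂ →+ N₁ :=
    { toFun := fun n => f.symm n
      map_zero' := map_zero f.symm
      map_add' := fun a b => map_add f.symm a b }
  have hφJ : ∀ j ∈ jac B, ∀ n : N₁, φ (j • n) = j • φ n := by
    intro j hj n
    have hjset : j ∈ jacobsonSet B := hj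
    rw [← hJ] at hjset
    obtain ⟨a, _, haj⟩ := hjset
    subst haj
    exact f.map_smul a n
  have hφ'J : ∀ j ∈ jac B, ∀ n : N₂, φ' (j • n) = j • φ' n := by
    intro j hj n
    have hjset : j ∈ jacobsonSet B := hj
    rw [← hJ] at hjset
    obtain ⟨a, _, haj⟩ := hjset
    subst haj
    exact f.symm.map_smul a n
  have hφsurj : Surjective φ := f.surjective
  have hφ'surj : Surjective φ' := f.symm.surjective
  obtain ⟨g, hg⟩ := core_surjective φ hφsurj hφJ hind₂ hns₂
  obtain ⟨g', hg'⟩ := core_surjective φ' hφ'surj hφ'J hind₁ hns₁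
  have hcomp : Surjective (g'.comp g) := by
    rw [LinearMap.coe_comp]
    exact hg'.comp hg
  have hinj2 : Injective (g'.comp g) :=
    IsNoetherian.injective_of_surjective_endomorphism _ hcomp
  have hginj : Injective g := by
    intro x y hxy
    apply hinj2
    rw [LinearMap.comp_apply, LinearMap.comp_apply, hxy]
  exact ⟨LinearEquiv.ofBijective g ⟨hginj, hg⟩⟩

end MainProof

/-- Let `A = S` be a subalgebra of the finite-dimensional `k`-algebra
`B` with `J_A = J_B`, and let `N₁, N₂` be indecomposable non-simple `B`-modules.
If the restrictions of `N₁` and `N₂` to `A` are isomorphic as `A`-modules, then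
`N₁ ≅ N₂` as `B`-modules. -/
theorem restriction_iso_implies_iso_of_indecomposable_nonsimple
    (k B : Type) [Field k] [Ring B] [Algebra k B] [FiniteDimensional k B]
    (S : Subalgebra k B)
    (hJ : Subtype.val '' jacobsonSet ↥S = jacobsonSet B)
    (N₁ : Type) [AddCommGroup N₁] [Module B N₁] [Module.Finite B N₁]
    (N₂ : Type) [AddCommGroup N₂] [Module B N₂] [Module.Finite B N₂]
    (hind₁ : IsIndecomposableModule B N₁) (hind₂ : IsIndecomposableModule B N₂)
    (hns₁ : ¬ IsSimpleModule B N₁) (hns₂ : ¬ IsSimpleModule B N₂)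
    (hres : letI := restModule k B S N₁
            letI := restModule k B S N₂
            Nonempty (N₁ ≃ₗ[↥S] N₂)) :
    Nonempty (N₁ ≃ₗ[B] N₂) :=
  restriction_iso_implies_iso_aux k B S hJ N₁ N₂ hind₁ hind₂ hns₁ hns₂ hres
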